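/- Let 𝒟 be a nonempty compact set of d-dimensional copulas. Then (𝒟,⪯) is coverable from below: for every D ∈ 𝒟 there exists C ∈ 𝒟 such that C ⪯ D and C is a minimal element of (𝒟,⪯) (i.e., for every E ∈ 𝒟, E ⪯ C implies E = C). In particular, for every copula D there exists a minimal copula C with C ⪯ D. -/

import Mathlib

open MeasureTheory unitInterval

/-- The unit cube `[0,1]^d`, modelled as functions `Fin d → [0,1]`. -/
abbrev Cube (d : ℕ) : Type := Fin d → unitInterval

/-- `η_K(u,v)`: the vector whose `k`-th coordinate is `v k` if `k ∈ K` and `u k` otherwise. -/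
def etaK {d : ℕ} (K : Finset (Fin d)) (u v : Cube d) : Cube d :=
  fun k => if k ∈ K then v k else u k

/-- `C` is a `d`-dimensional copula. -/
def IsCopula {d : ℕ} (C : Cube d → ℝ) : Prop :=
  (∀ u v : Cube d, u ≤ v →
      0 ≤ ∑ K : Finset (Fin d), (-1 : ℝ) ^ (d - K.card) * C (etaK K u v)) ∧
  (∀ k : Fin d, ∀ u : Cube d, C (etaK {k} u 0) = 0) ∧
  (∀ k : Fin d, ∀ u : Cube d, C (etaK {k} 1 u) = (u k : ℝ))

/-- The reflection `ν_K`, i.e. the composition of the commuting reflections `ν_k`, `k ∈ K`,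
written in closed (inclusion–exclusion) form: the coordinates in `L ⊆ K` are reflected to
`1 - u k`, the remaining coordinates of `K` are set to `1`. -/
noncomputable def nuK {d : ℕ} (K : Finset (Fin d)) (C : Cube d → ℝ) : Cube d → ℝ :=
  fun u => ∑ L ∈ K.powerset, (-1 : ℝ) ^ L.card *
    C (fun k => if k ∈ L then unitInterval.symm (u k) else if k ∈ K then 1 else u k)

/-- The total reflection `τ = ν_{{1,...,d}}`, sending a copula to its survival copula. -/
noncomputable def survival {d : ℕ} (C : Cube d → ℝ) : Cube d → ℝ := nuK Finset.univ C

/-- The concordance order `C ⪯ D`: `C(u) ≤ D(u)` and `(τ C)(u) ≤ (τ D)(u)` for all `u`. -/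
def ConcLE {d : ℕ} (C D : Cube d → ℝ) : Prop :=
  (∀ u, C u ≤ D u) ∧ (∀ u, survival C u ≤ survival D u)

/-- A minimal copula: a minimal element of the set of all copulas w.r.t. concordance order. -/
def IsMinimalCopula {d : ℕ} (C : Cube d → ℝ) : Prop :=
  IsCopula C ∧ ∀ D : Cube d → ℝ, IsCopula D → ConcLE D C → D = C

/-- `μ` is the copula measure `Q^C` of `C`: a Borel probability measure on the cube
with `μ [0,u] = C u` for all `u`. -/
def IsCopulaMeasure {d : ℕ} (C : Cube d → ℝ) (μ : Measure (Cube d)) : Prop :=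
  IsProbabilityMeasure μ ∧ ∀ u : Cube d, μ (Set.Icc 0 u) = ENNReal.ofReal (C u)

/-- `C` is `K`-countermonotonic: there are strictly increasing continuous functions
`g k : [0,1] → ℝ` (`k ∈ K`) and `c : ℝ` with `Q^C {u : ∑ k ∈ K, g k (u k) = c} = 1`. -/
def IsKCM {d : ℕ} (K : Finset (Fin d)) (C : Cube d → ℝ) : Prop :=
  ∃ (g : Fin d → unitInterval → ℝ) (c : ℝ),
    (∀ k ∈ K, StrictMono (g k) ∧ Continuous (g k)) ∧
    ∃ μ : Measure (Cube d), IsCopulaMeasure C μ ∧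
      μ {u : Cube d | ∑ k ∈ K, g k (u k) = c} = 1

/-- `C` is Kendall-countermonotonic (`τ`-CM):
`min (C u) ((τ C)(1 - u)) = 0` for every `u` with `0 < u < 1` coordinatewise. -/
noncomputable def IsTauCM {d : ℕ} (C : Cube d → ℝ) : Prop :=
  ∀ u : Cube d, (∀ k, 0 < u k ∧ u k < 1) →
    min (C u) (survival C (fun k => unitInterval.symm (u k))) = 0

/-- The upper Fréchet–Hoeffding bound `M(u) = min {u_1, ..., u_d}`. -/
noncomputable def Mcop {d : ℕ} : Cube d → ℝ :=
  fun u => sInf (Set.range fun k => (u k : ℝ))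

/-- `κ` is continuous: `κ (Cₙ) → κ C` whenever copulas `Cₙ` converge uniformly to a copula `C`. -/
def ContinuousFunctional {d : ℕ} (κ : (Cube d → ℝ) → ℝ) : Prop :=
  ∀ (Cs : ℕ → Cube d → ℝ) (C : Cube d → ℝ), (∀ n, IsCopula (Cs n)) → IsCopula C →
    TendstoUniformly Cs C Filter.atTop →
    Filter.Tendsto (fun n => κ (Cs n)) Filter.atTop (nhds (κ C))

/-- `κ` is concordance order preserving. -/
def ConcPreserving {d : ℕ} (κ : (Cube d → ℝ) → ℝ) : Prop :=
  ∀ C D : Cube d → ℝ, IsCopula C → IsCopula D → ConcLE C D → κ C ≤ κ D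

/-- `κ` is strictly concordance order preserving. -/
def StrictConcPreserving {d : ℕ} (κ : (Cube d → ℝ) → ℝ) : Prop :=
  ConcPreserving κ ∧
  ∀ C D : Cube d → ℝ, IsCopula C → IsCopula D → ConcLE C D → C ≠ D → κ C < κ D

/-- `m(κ,𝒟)`: the set of all `D ∈ 𝒟` with `κ D = inf_{C ∈ 𝒟} κ C`. -/
noncomputable def MinSet {d : ℕ} (κ : (Cube d → ℝ) → ℝ) (𝒟 : Set (Cube d → ℝ)) :
    Set (Cube d → ℝ) :=
  {D ∈ 𝒟 | κ D = sInf (κ '' 𝒟)}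

section Aux
variable {d : ℕ}

lemma concle_refl (C : Cube d → ℝ) : ConcLE C C := ⟨fun _ => le_rfl, fun _ => le_rfl⟩

lemma concle_trans {A B C : Cube d → ℝ} (h1 : ConcLE A B) (h2 : ConcLE B C) : ConcLE A C :=
  ⟨fun u => (h1.1 u).trans (h2.1 u), fun u => (h1.2 u).trans (h2.2 u)⟩

lemma concle_antisymm {A B : Cube d → ℝ} (h1 : ConcLE A B) (h2 : ConcLE B A) : A = B :=
  funext fun u => le_antisymm (h1.1 u) (h2.1 u)

lemma eps_le {a b : ℝ} (h : ∀ ε : ℝ, 0 < ε → a ≤ b + ε) : a ≤ b := by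
  by_contra hab
  push_neg at hab
  have := h ((a - b) / 2) (by linarith)
  linarith

lemma cop_nonneg {C : Cube d → ℝ} (hC : IsCopula C) (u : Cube d) : 0 ≤ C u := by
  have h := hC.1 0 u (fun k => unitInterval.nonneg')
  have hsum : ∑ K : Finset (Fin d), (-1 : ℝ) ^ (d - K.card) * C (etaK K 0 u) = C u := by
    rw [Finset.sum_eq_single_of_mem (Finset.univ : Finset (Fin d)) (Finset.mem_univ _)]
    · have h1 : etaK (Finset.univ : Finset (Fin d)) 0 u = u := by
        funext k; simp [etaK]
      rw [h1, Finset.card_univ, Fintype.card_fin, Nat.sub_self, pow_zero, one_mul]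
    · intro K _ hK
      obtain ⟨j, hj⟩ : ∃ j, j ∉ K := by
        by_contra hcon
        push_neg at hcon
        exact hK (Finset.eq_univ_iff_forall.2 hcon)
      have h0 : etaK K 0 u = etaK {j} (etaK K 0 u) 0 := by
        funext k
        simp only [etaK, Finset.mem_singleton]
        by_cases hk : k = j
        · subst hk; simp [hj]
        · simp [hk]
      rw [h0, hC.2.1 j _, mul_zero]
  rw [hsum] at h
  exact h

lemma sum_mul_sub_abs_le {ι : Type*} (s : Finset ι) (sgn : ι → ℝ) (hs : ∀ i, |sgn i| ≤ 1)
    (a b : ι → ℝ) (ε : ℝ) (h : ∀ i ∈ s, |a i - b i| ≤ ε) :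
    |∑ i ∈ s, sgn i * a i - ∑ i ∈ s, sgn i * b i| ≤ s.card * ε := by
  rw [← Finset.sum_sub_distrib]
  calc |∑ i ∈ s, (sgn i * a i - sgn i * b i)| ≤ ∑ i ∈ s, |sgn i * a i - sgn i * b i| :=
        Finset.abs_sum_le_sum_abs _ _
    _ ≤ ∑ i ∈ s, ε := by
        refine Finset.sum_le_sum fun i hi => ?_
        rw [← mul_sub, abs_mul]
        calc |sgn i| * |a i - b i| ≤ 1 * ε :=
              mul_le_mul (hs i) (h i hi) (abs_nonneg _) zero_le_one
          _ = ε := one_mul ε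
    _ = s.card * ε := by rw [Finset.sum_const, nsmul_eq_mul]

lemma abs_neg_one_pow_le (n : ℕ) : |(-1 : ℝ) ^ n| ≤ 1 := by
  rw [abs_pow, abs_neg, abs_one, one_pow]

/-- The pointwise infimum of a set of copulas. -/
noncomputable def chainInf (c : Set (Cube d → ℝ)) : Cube d → ℝ :=
  fun u => sInf ((fun E => E u) '' c)

lemma chainInf_bdd {c : Set (Cube d → ℝ)} (hcop : ∀ F ∈ c, IsCopula F) (u : Cube d) :
    BddBelow ((fun E => E u) '' c) := by
  refine ⟨0, ?_⟩
  rintro x ⟨F, hF, rfl⟩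
  exact cop_nonneg (hcop F hF) u

lemma chainInf_le {c : Set (Cube d → ℝ)} (hcop : ∀ F ∈ c, IsCopula F) {E : Cube d → ℝ}
    (hE : E ∈ c) (u : Cube d) : chainInf c u ≤ E u :=
  csInf_le (chainInf_bdd hcop u) ⟨E, hE, rfl⟩

lemma chainInf_approx {c : Set (Cube d → ℝ)} (hchain : IsChain ConcLE c)
    (hcop : ∀ F ∈ c, IsCopula F) {E₀ : Cube d → ℝ} (hE₀ : E₀ ∈ c) (P : Finset (Cube d))
    {ε : ℝ} (hε : 0 < ε) :
    ∃ E ∈ c, ConcLE E E₀ ∧ ∀ p ∈ P, E p ≤ chainInf c p + ε := by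
  classical
  induction P using Finset.induction with
  | empty => exact ⟨E₀, hE₀, concle_refl _, by simp⟩
  | @insert a P ha ih =>
    obtain ⟨E₁, hE₁c, hE₁le, hE₁⟩ := ih
    have hne : ((fun E => E a) '' c).Nonempty := ⟨E₀ a, E₀, hE₀, rfl⟩
    have hlt : sInf ((fun E => E a) '' c) < chainInf c a + ε := by
      simp only [chainInf]
      linarith [le_refl (sInf ((fun E => E a) '' c))]
    obtain ⟨x, ⟨F, hFc, rfl⟩, hx⟩ := exists_lt_of_csInf_lt hne hlt
    have hmin : ∃ m ∈ c, ConcLE m E₁ ∧ ConcLE m F := by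
      rcases eq_or_ne E₁ F with rfl | hne'
      · exact ⟨E₁, hE₁c, concle_refl _, concle_refl _⟩
      rcases hchain hE₁c hFc hne' with h' | h'
      · exact ⟨E₁, hE₁c, concle_refl _, h'⟩
      · exact ⟨F, hFc, h', concle_refl _⟩
    obtain ⟨m, hmc, hm₁, hmF⟩ := hmin
    refine ⟨m, hmc, concle_trans hm₁ hE₁le, fun p hp => ?_⟩
    rcases Finset.mem_insert.1 hp with rfl | hp'
    · exact (hmF.1 p).trans hx.le
    · exact (hm₁.1 p).trans (hE₁ p hp')

lemma chainInf_isCopula {c : Set (Cube d → ℝ)} (hchain : IsChain ConcLE c)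
    (hcop : ∀ F ∈ c, IsCopula F) (hne : c.Nonempty) : IsCopula (chainInf c) := by
  classical
  obtain ⟨E₀, hE₀⟩ := hne
  have hconst : ∀ (p : Cube d) (w : ℝ), (∀ F ∈ c, F p = w) → chainInf c p = w := by
    intro p w hw
    have him : (fun E => E p) '' c = {w} := by
      apply Set.eq_singleton_iff_unique_mem.2
      exact ⟨⟨E₀, hE₀, hw E₀ hE₀⟩, by rintro x ⟨F, hF, rfl⟩; exact hw F hF⟩
    rw [chainInf]
    rw [him, csInf_singleton]
  refine ⟨?_, ?_, ?_⟩
  · intro u v huv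
    rw [← neg_zero, neg_le]
    refine eps_le fun ε hε => ?_
    set N : ℕ := (Finset.univ : Finset (Finset (Fin d))).card with hN
    have hε' : (0 : ℝ) < ε / (N + 1) := by positivity
    obtain ⟨E, hEc, _, hEap⟩ := chainInf_approx hchain hcop hE₀
      (Finset.image (fun K => etaK K u v) Finset.univ) hε'
    have habs : ∀ K ∈ (Finset.univ : Finset (Finset (Fin d))),
        |chainInf c (etaK K u v) - E (etaK K u v)| ≤ ε / (N + 1) := by
      intro K _
      have h1 := chainInf_le hcop hEc (etaK K u v)
      have h2 := hEap (etaK K u v) (Finset.mem_image_of_mem _ (Finset.mem_univ K))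
      rw [abs_le]
      constructor <;> linarith
    have hb := sum_mul_sub_abs_le (Finset.univ : Finset (Finset (Fin d)))
      (fun K => (-1 : ℝ) ^ (d - K.card)) (fun K => abs_neg_one_pow_le _)
      (fun K => chainInf c (etaK K u v)) (fun K => E (etaK K u v)) _ habs
    have hE0 := (hcop E hEc).1 u v huv
    have hNle : (N : ℝ) * (ε / (N + 1)) ≤ ε := by
      rw [div_eq_inv_mul, ← mul_assoc]
      have h1 : (N : ℝ) * ((N : ℝ) + 1)⁻¹ ≤ 1 := by
        rw [mul_inv_le_iff₀ (by positivity), one_mul]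
        linarith
      nlinarith
    have := abs_le.1 hb
    linarith [this.1]
  · intro k u
    exact hconst _ _ fun F hF => (hcop F hF).2.1 k u
  · intro k u
    exact hconst _ _ fun F hF => (hcop F hF).2.2 k u

lemma chainInf_concle {c : Set (Cube d → ℝ)} (hchain : IsChain ConcLE c)
    (hcop : ∀ F ∈ c, IsCopula F) {E : Cube d → ℝ} (hE : E ∈ c) :
    ConcLE (chainInf c) E := by
  classical
  refine ⟨chainInf_le hcop hE, fun u => eps_le fun ε hε => ?_⟩
  set N : ℕ := (Finset.univ : Finset (Fin d)).powerset.card with hN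
  have hε' : (0 : ℝ) < ε / (N + 1) := by positivity
  set q : Finset (Fin d) → Cube d := fun L => fun k =>
    if k ∈ L then unitInterval.symm (u k) else
      if k ∈ (Finset.univ : Finset (Fin d)) then 1 else u k with hq
  obtain ⟨E', hE'c, hE'le, hE'ap⟩ := chainInf_approx hchain hcop hE
    ((Finset.univ : Finset (Fin d)).powerset.image q) hε'
  have habs : ∀ L ∈ (Finset.univ : Finset (Fin d)).powerset,
      |chainInf c (q L) - E' (q L)| ≤ ε / (N + 1) := by
    intro L hL
    have h1 := chainInf_le hcop hE'c (q L)
    have h2 := hE'ap (q L) (Finset.mem_image_of_mem _ hL)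
    rw [abs_le]
    constructor <;> linarith
  have hb := sum_mul_sub_abs_le (Finset.univ : Finset (Fin d)).powerset
    (fun L => (-1 : ℝ) ^ L.card) (fun L => abs_neg_one_pow_le _)
    (fun L => chainInf c (q L)) (fun L => E' (q L)) _ habs
  have hNle : (N : ℝ) * (ε / (N + 1)) ≤ ε := by
    rw [div_eq_inv_mul, ← mul_assoc]
    have h1 : (N : ℝ) * ((N : ℝ) + 1)⁻¹ ≤ 1 := by
      rw [mul_inv_le_iff₀ (by positivity), one_mul]
      linarith
    nlinarith
  have hsurv1 : survival (chainInf c) u = ∑ L ∈ (Finset.univ : Finset (Fin d)).powerset,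
      (-1 : ℝ) ^ L.card * chainInf c (q L) := rfl
  have hsurv2 : survival E' u = ∑ L ∈ (Finset.univ : Finset (Fin d)).powerset,
      (-1 : ℝ) ^ L.card * E' (q L) := rfl
  have hlast := hE'le.2 u
  have := abs_le.1 hb
  rw [hsurv1]
  rw [hsurv2] at hlast
  linarith [this.1]

lemma chain_finset_min {β : Type*} {r : β → β → Prop} (hrefl : ∀ a, r a a)
    (htrans : ∀ a b c : β, r a b → r b c → r a c)
    (hc : ∀ a b : β, a ≠ b → r a b ∨ r b a)
    (t : Finset β) (htne : t.Nonempty) :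
    ∃ m ∈ t, ∀ x ∈ t, r m x := by
  classical
  induction t using Finset.induction with
  | empty => simp at htne
  | @insert a t ha ih =>
    rcases t.eq_empty_or_nonempty with rfl | htne'
    · exact ⟨a, by simp, by simp [hrefl]⟩
    · obtain ⟨m, hmt, hm⟩ := ih htne'
      rcases eq_or_ne a m with heq | hne
      · refine ⟨a, Finset.mem_insert_self _ _, fun x hx => ?_⟩
        rcases Finset.mem_insert.1 hx with rfl | hx
        exacts [hrefl x, heq ▸ hm x hx]
      · rcases hc a m hne with h | h
        · refine ⟨a, Finset.mem_insert_self _ _, fun x hx => ?_⟩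
          rcases Finset.mem_insert.1 hx with rfl | hx
          exacts [hrefl x, htrans _ _ _ h (hm x hx)]
        · refine ⟨m, Finset.mem_insert_of_mem hmt, fun x hx => ?_⟩
          rcases Finset.mem_insert.1 hx with rfl | hx
          exacts [h, hm x hx]

lemma concle_closed (E : Cube d → ℝ) :
    IsClosed {f : UniformFun (Cube d) ℝ | ConcLE (UniformFun.toFun f) E} := by
  have hev : ∀ p : Cube d, Continuous fun f : UniformFun (Cube d) ℝ =>
      UniformFun.toFun f p := fun p =>
    (UniformFun.uniformContinuous_eval ℝ p).continuous
  have heq : {f : UniformFun (Cube d) ℝ | ConcLE (UniformFun.toFun f) E} =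
      (⋂ u : Cube d, {f | UniformFun.toFun f u ≤ E u}) ∩
      ⋂ u : Cube d, {f | survival (UniformFun.toFun f) u ≤ survival E u} := by
    ext f
    simp [ConcLE, Set.mem_iInter]
  rw [heq]
  refine IsClosed.inter (isClosed_iInter fun u => isClosed_le (hev u) continuous_const)
    (isClosed_iInter fun u => isClosed_le ?_ continuous_const)
  simp only [survival, nuK]
  exact continuous_finset_sum _ fun L _ => continuous_const.mul (hev _)

end Aux

/-- Every nonempty compact (w.r.t. the topology of uniform convergence, i.e. the supremum
metric) set of copulas is coverable from below; in particular, below every copula there is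
a minimal copula. -/
theorem stmt12 (d : ℕ) (hd : 2 ≤ d) (𝒟 : Set (Cube d → ℝ))
    (h𝒟cop : ∀ C ∈ 𝒟, IsCopula C) (h𝒟ne : 𝒟.Nonempty)
    (h𝒟cpt : IsCompact (UniformFun.ofFun '' 𝒟 : Set (UniformFun (Cube d) ℝ))) :
    (∀ D ∈ 𝒟, ∃ C ∈ 𝒟, ConcLE C D ∧ ∀ E ∈ 𝒟, ConcLE E C → E = C) ∧
    (∀ D : Cube d → ℝ, IsCopula D → ∃ C : Cube d → ℝ, IsMinimalCopula C ∧ ConcLE C D) := by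

  constructor
  · -- Part 1: coverability from below within 𝒟
    intro D hD𝒟
    have hzorn : ∃ m : {C : Cube d → ℝ // C ∈ 𝒟 ∧ ConcLE C D},
        ∀ a : {C : Cube d → ℝ // C ∈ 𝒟 ∧ ConcLE C D},
          ConcLE a.1 m.1 → ConcLE m.1 a.1 := by
      refine exists_maximal_of_chains_bounded
        (r := fun a b : {C : Cube d → ℝ // C ∈ 𝒟 ∧ ConcLE C D} => ConcLE b.1 a.1)
        ?_ (fun h1 h2 => concle_trans h2 h1)
      intro ch hch
      rcases ch.eq_empty_or_nonempty with rfl | ⟨a₀, ha₀⟩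
      · exact ⟨⟨D, hD𝒟, concle_refl D⟩, fun a ha => absurd ha (Set.notMem_empty a)⟩
      have hZc : ∀ a : ↥ch, IsClosed {f : UniformFun (Cube d) ℝ |
          ConcLE (UniformFun.toFun f) a.1.1} := fun a => concle_closed _
      have hfin : ∀ t : Finset ↥ch, ((UniformFun.ofFun '' 𝒟) ∩
          ⋂ a ∈ t, {f : UniformFun (Cube d) ℝ |
            ConcLE (UniformFun.toFun f) a.1.1}).Nonempty := by
        intro t
        rcases t.eq_empty_or_nonempty with rfl | htne
        · simpa using h𝒟ne.image UniformFun.ofFun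
        obtain ⟨m, hmt, hm⟩ := chain_finset_min (β := ↥ch)
          (r := fun a b => ConcLE a.1.1 b.1.1)
          (fun a => concle_refl _) (fun a b c h1 h2 => concle_trans h1 h2)
          (fun a b hab => by
            have hne' : a.1 ≠ b.1 := fun h => hab (Subtype.ext h)
            rcases hch a.2 b.2 hne' with h | h
            exacts [Or.inr h, Or.inl h]) t htne
        refine ⟨UniformFun.ofFun m.1.1, ⟨m.1.1, m.1.2.1, rfl⟩, ?_⟩
        refine Set.mem_iInter₂.2 fun a ha => ?_
        show ConcLE (UniformFun.toFun (UniformFun.ofFun m.1.1)) a.1.1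
        exact hm a ha
      obtain ⟨f, hfS, hfZ⟩ := h𝒟cpt.inter_iInter_nonempty _ hZc hfin
      obtain ⟨C, hC𝒟, rfl⟩ := hfS
      have hCle : ∀ a : {C : Cube d → ℝ // C ∈ 𝒟 ∧ ConcLE C D}, a ∈ ch → ConcLE C a.1 := by
        intro a ha
        have := Set.mem_iInter.1 hfZ ⟨a, ha⟩
        exact this
      exact ⟨⟨C, hC𝒟, concle_trans (hCle a₀ ha₀) a₀.2.2⟩, fun a ha => hCle a ha⟩
    obtain ⟨m, hm⟩ := hzorn
    refine ⟨m.1, m.2.1, m.2.2, fun E hE𝒟 hECle => ?_⟩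
    have := hm ⟨E, hE𝒟, concle_trans hECle m.2.2⟩ hECle
    exact concle_antisymm hECle this
  · -- Part 2: below every copula there is a minimal copula
    intro D hD
    have hzorn : ∃ m : {C : Cube d → ℝ // IsCopula C ∧ ConcLE C D},
        ∀ a : {C : Cube d → ℝ // IsCopula C ∧ ConcLE C D},
          ConcLE a.1 m.1 → ConcLE m.1 a.1 := by
      refine exists_maximal_of_chains_bounded
        (r := fun a b : {C : Cube d → ℝ // IsCopula C ∧ ConcLE C D} => ConcLE b.1 a.1)
        ?_ (fun h1 h2 => concle_trans h2 h1)
      intro ch hch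
      rcases ch.eq_empty_or_nonempty with rfl | ⟨a₀, ha₀⟩
      · exact ⟨⟨D, hD, concle_refl D⟩, fun a ha => absurd ha (Set.notMem_empty a)⟩
      have hvchain : IsChain ConcLE (Subtype.val '' ch) := by
        rintro x ⟨a, ha, rfl⟩ y ⟨b, hb, rfl⟩ hxy
        have hne' : a ≠ b := fun h => hxy (congrArg Subtype.val h)
        rcases hch ha hb hne' with h | h
        exacts [Or.inr h, Or.inl h]
      have hvcop : ∀ F ∈ Subtype.val '' ch, IsCopula F := by
        rintro F ⟨a, _, rfl⟩; exact a.2.1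
      have hvne : (Subtype.val '' ch).Nonempty := ⟨a₀.1, a₀, ha₀, rfl⟩
      have hcop := chainInf_isCopula hvchain hvcop hvne
      have hleD : ConcLE (chainInf (Subtype.val '' ch)) D :=
        concle_trans (chainInf_concle hvchain hvcop ⟨a₀, ha₀, rfl⟩) a₀.2.2
      exact ⟨⟨chainInf (Subtype.val '' ch), hcop, hleD⟩, fun a ha =>
        chainInf_concle hvchain hvcop ⟨a, ha, rfl⟩⟩
    obtain ⟨m, hm⟩ := hzorn
    refine ⟨m.1, ⟨m.2.1, fun D' hD' hle => ?_⟩, m.2.2⟩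
    have := hm ⟨D', hD', concle_trans hle m.2.2⟩ hle
    exact concle_antisymm hle this
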